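/- Let v be a piecewise polynomial in time on a partition {I_n} with values in a Hilbert space, left-continuous, with jumps ⟦v⟧_{n−1} := v(t_{n−1}) − v(t_{n−1}^+). Define the Radau reconstruction I v on I_n by (I v)|_{I_n} := v|_{I_n} + ((−1)^{q_n}/2)(L_{q_n}^n − L_{q_n+1}^n)⟦v⟧_{n−1}. Then (I v)|_{I_n}(t_n) = v(t_n) and (I v)|_{I_n}(t_{n−1}^+) = v(t_{n−1}), so I v is continuous in time at each partition point t_1, …, t_{N−1}. -/

import Mathlib

open MeasureTheory Polynomial

/-- The Legendre polynomial of degree `q` (Rodrigues' formula). -/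
noncomputable def legendreP (q : ℕ) : Polynomial ℝ :=
  ((1 : ℝ) / (2 ^ q * q.factorial)) • (fun p : Polynomial ℝ => derivative p)^[q] ((X ^ 2 - 1) ^ q)

/-- The Legendre polynomial of degree `q` mapped affinely from `(-1,1)` to `(a,b)`,
evaluated at `t`. -/
noncomputable def legMap (q : ℕ) (a b t : ℝ) : ℝ :=
  (legendreP q).eval (2 * (t - a) / (b - a) - 1)

lemma deriv_iter_eval (n : ℕ) (c : ℝ) (p : Polynomial ℝ) :
    ((fun p : Polynomial ℝ => derivative p)^[n] ((X - C c) ^ n * p)).eval c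
      = n.factorial * p.eval c := by
  induction n generalizing p with
  | zero => simp
  | succ n ih =>
      have h : (fun p : Polynomial ℝ => derivative p)^[n+1] ((X - C c) ^ (n+1) * p)
          = (fun p : Polynomial ℝ => derivative p)^[n]
              ((X - C c) ^ n * (C ((n:ℝ)+1) * p + (X - C c) * derivative p)) := by
        rw [Function.iterate_succ_apply]
        congr 1
        simp only [derivative_mul, derivative_pow, derivative_X, derivative_C,
          derivative_sub, sub_zero, mul_one, Nat.cast_add, Nat.cast_one,
          Nat.add_sub_cancel, map_add, map_one]
        ring
      rw [h, ih]
      simp [Nat.factorial_succ]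
      ring

lemma legendreP_eval_one (q : ℕ) : (legendreP q).eval 1 = 1 := by
  have h : ((X:Polynomial ℝ) ^ 2 - 1) ^ q = (X - C 1) ^ q * (X + 1) ^ q := by
    rw [← mul_pow]; congr 1; simp only [C_1, map_neg]; ring
  unfold legendreP
  rw [eval_smul, h, deriv_iter_eval]
  have h2 : ((X:Polynomial ℝ) + 1).eval 1 = 2 := by norm_num
  simp only [smul_eq_mul, eval_pow, h2]
  have hq : (2:ℝ) ^ q * q.factorial ≠ 0 := by positivity
  field_simp

lemma legendreP_eval_neg_one (q : ℕ) : (legendreP q).eval (-1) = (-1) ^ q := by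
  have h : ((X:Polynomial ℝ) ^ 2 - 1) ^ q = (X - C (-1)) ^ q * (X - 1) ^ q := by
    rw [← mul_pow]; congr 1; simp only [C_1, map_neg]; ring
  unfold legendreP
  rw [eval_smul, h, deriv_iter_eval]
  have h2 : ((X:Polynomial ℝ) - 1).eval (-1) = -2 := by norm_num
  simp only [smul_eq_mul, eval_pow, h2]
  have hq : (2:ℝ) ^ q * q.factorial ≠ 0 := by positivity
  field_simp
  rw [neg_pow]
  ring

/-- Radau reconstruction endpoint values. On the interval `I_n = (a,b)`, with `vn`
the restriction of `v` to `I_n` (a `V`-valued polynomial of degree `q`), `vprev`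
the left-continuous value `v(t_{n-1})` from the previous interval (so the jump is
`⟦v⟧_{n-1} = vprev − vn(a)`), the Radau reconstruction
`(I v)(t) = vn(t) + ((−1)^q/2)(L_q(t) − L_{q+1}(t)) • ⟦v⟧_{n-1}`
satisfies `(I v)(t_n) = v(t_n)` and `(I v)(t_{n-1}⁺) = v(t_{n-1})`; hence `I v` is
continuous in time at each interior partition point. -/
theorem stmt_6 {V : Type*} [NormedAddCommGroup V] [Module ℝ V]
    (q : ℕ) (a b : ℝ) (hab : a < b) (vn : ℝ → V) (vprev : V) :
    (vn b + (((-1 : ℝ) ^ q / 2) * (legMap q a b b - legMap (q + 1) a b b)) • (vprev - vn a)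
        = vn b) ∧
    (vn a + (((-1 : ℝ) ^ q / 2) * (legMap q a b a - legMap (q + 1) a b a)) • (vprev - vn a)
        = vprev) := by
  have hba : b - a ≠ 0 := sub_ne_zero.mpr hab.ne'
  have hb : ∀ r : ℕ, legMap r a b b = 1 := by
    intro r
    unfold legMap
    rw [show 2 * (b - a) / (b - a) - 1 = 1 by field_simp; ring]
    exact legendreP_eval_one r
  have ha : ∀ r : ℕ, legMap r a b a = (-1) ^ r := by
    intro r
    unfold legMap
    rw [show 2 * (a - a) / (b - a) - 1 = -1 by field_simp; ring]
    exact legendreP_eval_neg_one r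
  constructor
  · rw [hb, hb]
    simp
  · rw [ha, ha]
    have : ((-1 : ℝ) ^ q / 2) * ((-1)^q - (-1)^(q+1)) = 1 := by
      have h1 : (((-1:ℝ))^q)^2 = 1 := by
        rw [← pow_mul, mul_comm, pow_mul]; norm_num
      rw [pow_succ]
      linear_combination h1
    rw [this, one_smul, add_sub_cancel]
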